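/- Let K be the Kalton–Peck map on real ℓ₂ and let e₁,…,eₙ be the first n standard unit vectors, n ≥ 1. Then K(eᵢ) = 0 for each i, and for every choice of signs ε₁,…,εₙ ∈ {−1,1}: K(ε₁e₁ + ⋯ + εₙeₙ) = −(log n / 2)·(ε₁e₁ + ⋯ + εₙeₙ); consequently ‖K(∑ᵢ εᵢeᵢ) − ∑ᵢ εᵢ K(eᵢ)‖₂ = (√n · log n)/2. -/
import Mathlib


/-- The Kalton–Peck map on real `ℓ₂`, defined pointwise:
`(K x)ₘ = xₘ · log(|xₘ| / ‖x‖₂)` (with the convention `Real.log 0 = 0`). -/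
noncomputable def kaltonPeckSeqR (x : lp (fun _ : ℕ => ℝ) 2) : ℕ → ℝ :=
  fun m => x m * Real.log (|x m| / ‖x‖)

/-- for the first `n` standard unit vectors of real `ℓ₂` we have
`K eᵢ = 0`, `K(∑ εᵢ eᵢ) = −(log n / 2)·(∑ εᵢ eᵢ)` for any signs `εᵢ ∈ {−1,1}`, and
`‖K(∑ εᵢ eᵢ) − ∑ εᵢ K(eᵢ)‖₂ = √n · log n / 2`. -/
theorem stmt_14 (n : ℕ) (hn : 1 ≤ n) (ε : Fin n → ℝ)
    (hε : ∀ i, ε i = 1 ∨ ε i = -1)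
    (e : Fin n → lp (fun _ : ℕ => ℝ) 2)
    (he : ∀ (i : Fin n) (m : ℕ), e i m = if m = (i : ℕ) then 1 else 0)
    (x : lp (fun _ : ℕ => ℝ) 2) (hx : x = ∑ i, ε i • e i) :
    (∀ (i : Fin n) (m : ℕ), kaltonPeckSeqR (e i) m = 0) ∧
    (∀ m : ℕ, kaltonPeckSeqR x m = -(Real.log n / 2) * x m) ∧
    (∀ y : lp (fun _ : ℕ => ℝ) 2,
      (∀ m : ℕ, y m = kaltonPeckSeqR x m - ∑ i, ε i * kaltonPeckSeqR (e i) m) →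
      ‖y‖ = Real.sqrt n * Real.log n / 2) := by
  have hp : 0 < (2 : ENNReal).toReal := by norm_num
  -- the auxiliary coefficient function
  set f : ℕ → ℝ := fun m => if h : m < n then ε ⟨m, h⟩ else 0 with hf
  -- e i is a single
  have he' : ∀ i : Fin n, e i = lp.single 2 (i : ℕ) (1 : ℝ) := by
    intro i
    refine lp.ext (funext fun m => ?_)
    rw [he i m, lp.single_apply]
    by_cases h : m = (i : ℕ) <;> simp [h]
  have hK1 : ∀ (i : Fin n) (m : ℕ), kaltonPeckSeqR (e i) m = 0 := by
    intro i m
    have hne : ‖e i‖ = 1 := by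
      rw [he' i]
      simpa using lp.norm_single hp (fun _ : ℕ => (1 : ℝ)) (i : ℕ)
    unfold kaltonPeckSeqR
    rw [hne, he i m]
    by_cases h : m = (i : ℕ) <;> simp [h]
  -- pointwise formula for x
  have hxm : ∀ m : ℕ, x m = f m := by
    intro m
    rw [hx]
    rw [lp.coeFn_sum]
    simp only [Finset.sum_apply, lp.coeFn_smul, Pi.smul_apply, he, smul_eq_mul, mul_ite,
      mul_one, mul_zero]
    by_cases h : m < n
    · rw [Finset.sum_eq_single (⟨m, h⟩ : Fin n)]
      · simp [hf, h]
      · intro b _ hb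
        have : m ≠ (b : ℕ) := fun hc => hb (Fin.ext hc.symm)
        simp [this]
      · simp
    · have : ∀ i : Fin n, m ≠ (i : ℕ) := fun i hc => h (hc ▸ i.isLt)
      simp [hf, h, this]
  -- x as a sum of singles
  have hxs : x = ∑ m ∈ Finset.range n, lp.single 2 m (f m) := by
    rw [hx]
    rw [Finset.sum_congr rfl (fun i _ => by rw [he' i, ← lp.single_smul])]
    rw [← Fin.sum_univ_eq_sum_range (fun m => lp.single 2 m (f m))]
    refine Finset.sum_congr rfl fun i _ => ?_
    congr 1
    simp [hf, i.isLt, smul_eq_mul]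
  have hfabs : ∀ m ∈ Finset.range n, ‖f m‖ ^ (2 : ℝ) = 1 := by
    intro m hm
    rw [Finset.mem_range] at hm
    rcases hε ⟨m, hm⟩ with h | h <;> simp [hf, hm, h]
  have hnx : ‖x‖ = Real.sqrt n := by
    have h2 : ‖x‖ ^ (2 : ℝ) = (n : ℝ) := by
      rw [hxs]
      have := lp.norm_sum_single hp f (Finset.range n)
      simp only [ENNReal.toReal_ofNat] at this ⊢
      rw [this, Finset.sum_congr rfl hfabs]
      simp
    have hxnn : (0 : ℝ) ≤ ‖x‖ := norm_nonneg _
    rw [Real.rpow_two] at h2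
    nlinarith [Real.sq_sqrt (by positivity : (0:ℝ) ≤ (n:ℝ)),
      Real.sqrt_nonneg (n : ℝ), hxnn]
  -- second part
  have hK2 : ∀ m : ℕ, kaltonPeckSeqR x m = -(Real.log n / 2) * x m := by
    intro m
    unfold kaltonPeckSeqR
    rw [hnx, hxm m]
    by_cases h : m < n
    · have habs : |f m| = 1 := by rcases hε ⟨m, h⟩ with h' | h' <;> simp [hf, h, h']
      rw [habs]
      rw [one_div, Real.log_inv, Real.log_sqrt (by positivity)]
      ring
    · simp [hf, h]
  refine ⟨hK1, hK2, ?_⟩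
  intro y hy
  have hy' : y = (-(Real.log n / 2)) • x := by
    refine lp.ext (funext fun m => ?_)
    rw [lp.coeFn_smul]
    simp only [Pi.smul_apply, smul_eq_mul]
    rw [hy m, hK2 m]
    simp [hK1]
  rw [hy', norm_smul, hnx]
  have hlog : 0 ≤ Real.log n := Real.log_nonneg (by exact_mod_cast hn)
  rw [norm_neg, Real.norm_eq_abs, abs_of_nonneg (by positivity)]
  ring
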